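/- Fix (s,a) ∈ S × A and v : S → ℝ, and let n = |S|. Let σ : {1,…,n} → S be a bijection such that v(σ(1)) ≥ v(σ(2)) ≥ … ≥ v(σ(n)), and let j ∈ {1,…,n} satisfy P̲(σ(j),s,a) ≤ 1 − ∑_{i<j} P̲(σ(i),s,a) − ∑_{i>j} P̄(σ(i),s,a) ≤ P̄(σ(j),s,a). Define p* : S → ℝ by p*(σ(i)) = P̲(σ(i),s,a) for i < j, p*(σ(j)) = 1 − ∑_{i<j} P̲(σ(i),s,a) − ∑_{i>j} P̄(σ(i),s,a), and p*(σ(i)) = P̄(σ(i),s,a) for i > j. Then p* ∈ Δ_{s,a}, and for every p ∈ Δ_{s,a}, ∑_{s'∈S} p*(s') v(s') ≤ ∑_{s'∈S} p(s') v(s'); in particular min_{p ∈ Δ_{s,a}} ∑_{s'∈S} p(s') v(s') = ∑_{s'∈S} p*(s') v(s'). -/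
import Mathlib


/-- The ambiguity set `Δ_{s,a}` of transition probability vectors compatible with the
interval bounds `Plow`, `Pup` at state `s` and action `a`. -/
def ambiguitySet {S A : Type*} [Fintype S] (Plow Pup : S → S → A → ℝ) (s : S) (a : A) :
    Set (S → ℝ) :=
  {p | (∀ s', 0 ≤ p s' ∧ p s' ≤ 1 ∧ Plow s' s a ≤ p s' ∧ p s' ≤ Pup s' s a) ∧
    ∑ s', p s' = 1}

/-- `min_{p ∈ Δ_{s,a}} ∑_{s' ∈ S} p(s') v(s')`. -/
noncomputable def minExp {S A : Type*} [Fintype S] (Plow Pup : S → S → A → ℝ)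
    (s : S) (a : A) (v : S → ℝ) : ℝ :=
  sInf ((fun p : S → ℝ => ∑ s', p s' * v s') '' ambiguitySet Plow Pup s a)

/-- `max_{p ∈ Δ_{s,a}} ∑_{s' ∈ S} p(s') v(s')`. -/
noncomputable def maxExp {S A : Type*} [Fintype S] (Plow Pup : S → S → A → ℝ)
    (s : S) (a : A) (v : S → ℝ) : ℝ :=
  sSup ((fun p : S → ℝ => ∑ s', p s' * v s') '' ambiguitySet Plow Pup s a)

/-- The pessimistic Bellman-policy operator
`F̲(v,π)(s) = R̲(s,π(s)) + γ · min_{p ∈ Δ_{s,π(s)}} ∑_{s'} p(s') v(s')`. -/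
noncomputable def Fpess {S A : Type*} [Fintype S] (Plow Pup : S → S → A → ℝ)
    (Rlow : S → A → ℝ) (γ : ℝ) (v : S → ℝ) (π : S → A) (s : S) : ℝ :=
  Rlow s (π s) + γ * minExp Plow Pup s (π s) v

/-- The optimistic Bellman-policy operator
`F̄(v,π)(s) = R̄(s,π(s)) + γ · max_{p ∈ Δ_{s,π(s)}} ∑_{s'} p(s') v(s')`. -/
noncomputable def Fopt {S A : Type*} [Fintype S] (Plow Pup : S → S → A → ℝ)
    (Rup : S → A → ℝ) (γ : ℝ) (v : S → ℝ) (π : S → A) (s : S) : ℝ :=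
  Rup s (π s) + γ * maxExp Plow Pup s (π s) v

/-- The pessimistic interval Bellman operator
`G̲(v)(s) = sup_{a ∈ A} [ R̲(s,a) + γ · min_{p ∈ Δ_{s,a}} ∑_{s'} p(s') v(s') ]`. -/
noncomputable def Gpess {S A : Type*} [Fintype S] (Plow Pup : S → S → A → ℝ)
    (Rlow : S → A → ℝ) (γ : ℝ) (v : S → ℝ) (s : S) : ℝ :=
  ⨆ a : A, (Rlow s a + γ * minExp Plow Pup s a v)

/-- The optimistic interval Bellman operator
`Ḡ(v)(s) = sup_{a ∈ A} [ R̄(s,a) + γ · max_{p ∈ Δ_{s,a}} ∑_{s'} p(s') v(s') ]`. -/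
noncomputable def Gopt {S A : Type*} [Fintype S] (Plow Pup : S → S → A → ℝ)
    (Rup : S → A → ℝ) (γ : ℝ) (v : S → ℝ) (s : S) : ℝ :=
  ⨆ a : A, (Rup s a + γ * maxExp Plow Pup s a v)

/-- closed-form minimizer of the expected value over the ambiguity set:
the vector `pstar` that assigns the lower bound to the states with the largest values
of `v`, the upper bound to the states with the smallest values, and the residual mass
to the pivot state, attains the minimum of `∑ p(s') v(s')` over `Δ_{s,a}`. -/
theorem minExp_closed_form {S A : Type*} [Fintype S] [Nonempty S] [Nonempty A]
    (Plow Pup : S → S → A → ℝ)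
    (hP01 : ∀ s' s a, 0 ≤ Plow s' s a ∧ Pup s' s a ≤ 1)
    (hPle : ∀ s' s a, Plow s' s a ≤ Pup s' s a)
    (hPsum : ∀ s a, (∑ s', Plow s' s a) ≤ 1 ∧ 1 ≤ ∑ s', Pup s' s a)
    (s : S) (a : A) (v : S → ℝ)
    (σ : Fin (Fintype.card S) ≃ S) (hσ : Antitone fun i => v (σ i))
    (j : Fin (Fintype.card S)) (ξ : ℝ)
    (hξ : ξ = 1 - (∑ i ∈ Finset.univ.filter (fun i => i < j), Plow (σ i) s a)
      - ∑ i ∈ Finset.univ.filter (fun i => j < i), Pup (σ i) s a)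
    (hj : Plow (σ j) s a ≤ ξ ∧ ξ ≤ Pup (σ j) s a)
    (pstar : S → ℝ)
    (hpstar : ∀ i : Fin (Fintype.card S),
      pstar (σ i) = if i < j then Plow (σ i) s a
        else if i = j then ξ else Pup (σ i) s a) :
    pstar ∈ ambiguitySet Plow Pup s a ∧
    (∀ p ∈ ambiguitySet Plow Pup s a,
      (∑ s', pstar s' * v s') ≤ ∑ s', p s' * v s') ∧
    minExp Plow Pup s a v = ∑ s', pstar s' * v s' := by
  classical
  obtain ⟨hjl, hju⟩ := hj
  -- case analysis on pstar values
  have hmem : pstar ∈ ambiguitySet Plow Pup s a := by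
    constructor
    · intro s'
      obtain ⟨i, rfl⟩ := σ.surjective s'
      rw [hpstar i]
      rcases lt_trichotomy i j with h | h | h
      · rw [if_pos h]
        exact ⟨(hP01 _ _ _).1, le_trans (hPle _ _ _) (hP01 _ _ _).2,
          le_refl _, hPle _ _ _⟩
      · subst h
        rw [if_neg (lt_irrefl i), if_pos rfl]
        exact ⟨le_trans (hP01 _ _ _).1 hjl, le_trans hju (hP01 _ _ _).2, hjl, hju⟩
      · rw [if_neg (not_lt.2 h.le), if_neg h.ne']
        exact ⟨le_trans (hP01 _ _ _).1 (hPle _ _ _), (hP01 _ _ _).2,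
          hPle _ _ _, le_refl _⟩
    · have hfilter : Finset.univ.filter (fun i : Fin (Fintype.card S) => ¬ i < j)
          = insert j (Finset.univ.filter (fun i => j < i)) := by
        ext i
        simp only [Finset.mem_filter, Finset.mem_univ, true_and, Finset.mem_insert,
          not_lt]
        constructor
        · intro h
          rcases lt_or_eq_of_le h with h' | h'
          · exact Or.inr h'
          · exact Or.inl h'.symm
        · intro h
          rcases h with h | h
          · exact h ▸ le_refl _
          · exact h.le
      have h1 : ∑ i, pstar (σ i)
          = (∑ i ∈ Finset.univ.filter (fun i => i < j), Plow (σ i) s a)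
            + (ξ + ∑ i ∈ Finset.univ.filter (fun i => j < i), Pup (σ i) s a) := by
        rw [← Finset.sum_filter_add_sum_filter_not Finset.univ (fun i => i < j)]
        congr 1
        · apply Finset.sum_congr rfl
          intro i hi
          rw [Finset.mem_filter] at hi
          rw [hpstar i, if_pos hi.2]
        · rw [hfilter, Finset.sum_insert (by simp)]
          congr 1
          · rw [hpstar j, if_neg (lt_irrefl j), if_pos rfl]
          · apply Finset.sum_congr rfl
            intro i hi
            rw [Finset.mem_filter] at hi
            rw [hpstar i, if_neg (not_lt.2 hi.2.le), if_neg hi.2.ne']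
      have h2 : ∑ s', pstar s' = ∑ i, pstar (σ i) :=
        (Equiv.sum_comp σ pstar).symm
      rw [h2, h1, hξ]
      ring
  have hmin : ∀ p ∈ ambiguitySet Plow Pup s a,
      (∑ s', pstar s' * v s') ≤ ∑ s', p s' * v s' := by
    intro p hp
    obtain ⟨hpb, hps⟩ := hp
    have key : ∀ i : Fin (Fintype.card S),
        (p (σ i) - pstar (σ i)) * v (σ j) ≤ (p (σ i) - pstar (σ i)) * v (σ i) := by
      intro i
      rcases lt_trichotomy i j with h | h | h
      · have hd : 0 ≤ p (σ i) - pstar (σ i) := by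
          have := (hpb (σ i)).2.2.1
          rw [hpstar i, if_pos h]
          linarith
        have hv : v (σ j) ≤ v (σ i) := hσ h.le
        exact mul_le_mul_of_nonneg_left hv hd
      · subst h; rfl
      · have hd : p (σ i) - pstar (σ i) ≤ 0 := by
          have := (hpb (σ i)).2.2.2
          rw [hpstar i, if_neg (not_lt.2 h.le), if_neg h.ne']
          linarith
        have hv : v (σ i) ≤ v (σ j) := hσ h.le
        exact mul_le_mul_of_nonpos_left hv hd
    have hsum0 : ∑ i, (p (σ i) - pstar (σ i)) = 0 := by
      have e1 : ∑ i, p (σ i) = 1 := by rw [Equiv.sum_comp σ p, hps]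
      have e2 : ∑ i, pstar (σ i) = 1 := by rw [Equiv.sum_comp σ pstar, hmem.2]
      rw [Finset.sum_sub_distrib, e1, e2]; ring
    have hkey : 0 ≤ ∑ i, (p (σ i) - pstar (σ i)) * v (σ i) := by
      calc (0:ℝ) = (∑ i, (p (σ i) - pstar (σ i))) * v (σ j) := by rw [hsum0]; ring
        _ = ∑ i, (p (σ i) - pstar (σ i)) * v (σ j) := by rw [Finset.sum_mul]
        _ ≤ ∑ i, (p (σ i) - pstar (σ i)) * v (σ i) := Finset.sum_le_sum fun i _ => key i
    have e3 : ∑ i, (p (σ i) - pstar (σ i)) * v (σ i)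
        = (∑ s', p s' * v s') - ∑ s', pstar s' * v s' := by
      rw [← Equiv.sum_comp σ (fun s' => p s' * v s'),
        ← Equiv.sum_comp σ (fun s' => pstar s' * v s'), ← Finset.sum_sub_distrib]
      apply Finset.sum_congr rfl
      intro i _
      ring
    linarith [e3 ▸ hkey]
  refine ⟨hmem, hmin, ?_⟩
  apply le_antisymm
  · apply csInf_le
    · refine ⟨∑ s', pstar s' * v s', ?_⟩
      rintro x ⟨q, hq, rfl⟩
      exact hmin q hq
    · exact ⟨pstar, hmem, rfl⟩
  · refine le_csInf ⟨∑ s', pstar s' * v s', pstar, hmem, rfl⟩ ?_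
    rintro x ⟨q, hq, rfl⟩
    exact hmin q hq
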